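/- Let m ∈ ℕ. Any ℓ∞-product of m ℝ-trees has Nagata dimension ≤ m with constant ≤ γ, where γ < ∞ depends only on m (i.e. there is a single constant γ = γ(m) that works simultaneously for all ℓ∞-products of m ℝ-trees). -/

import Mathlib

open Metric Set
open scoped Classical ENNReal NNReal

noncomputable section

/-- The underlying set of the lamplighter space over `X`: a lamp configuration
(a finite set of lit lamps) together with the position of the lamplighter. -/
abbrev Lamp (X : Type*) := Finset X × X

namespace Lamplighter

variable {X Y Z : Type*}

/-- The length of the path visiting the points of a list in order,
with respect to the distance function `d`. -/
def pathLength (d : X → X → ℝ) : List X → ℝ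
  | [] => 0
  | [_] => 0
  | x :: y :: l => d x y + pathLength d (y :: l)

/-- The symmetric difference of the lamp configurations of `p` and `q`, as a set. -/
def sd (p q : Lamp X) : Set X :=
  ((p.1 : Set X) \ (q.1 : Set X)) ∪ ((q.1 : Set X) \ (p.1 : Set X))

/-- The traveling salesman semimetric on the lamplighter space:
the infimum of lengths of finite paths starting at `p.2`, ending at `q.2`, and
visiting every point of the symmetric difference of the configurations. -/
def TSP (d : X → X → ℝ) (p q : Lamp X) : ℝ :=
  sInf { s : ℝ | ∃ l : List X, l.head? = some p.2 ∧ l.getLast? = some q.2 ∧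
    (∀ a ∈ sd p q, a ∈ l) ∧ s = pathLength d l }

/-- The diameter (in `ℝ≥0∞`) of a set with respect to a distance function `d`. -/
def ediamD (d : X → X → ℝ) (A : Set X) : ℝ≥0∞ :=
  ⨆ x ∈ A, ⨆ y ∈ A, ENNReal.ofReal (d x y)

/-- The traveling salesman shortcut semimetric:
`TSCP((A,x),(B,y)) = diam({x,y} ∪ (A Δ B))`. -/
def TSCP (d : X → X → ℝ) (p q : Lamp X) : ℝ :=
  (ediamD d ({p.2, q.2} ∪ sd p q)).toReal

/-- `ρ((A,x),(B,y))` is `0` if `A = B` and `1` otherwise. -/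
def rho (p q : Lamp X) : ℝ := if p.1 = q.1 then 0 else 1

/-- The lamplighter metric `d_La = TSP + ρ`. -/
def dLa (d : X → X → ℝ) (p q : Lamp X) : ℝ := TSP d p q + rho p q

/-- `X` is `K`-TSP-efficient if `TSP ≤ K • TSCP` on `La(X)²`. -/
def TSPEfficient (d : X → X → ℝ) (K : ℝ) : Prop :=
  ∀ p q : Lamp X, TSP d p q ≤ K * TSCP d p q

/-- A weak `C`-biLipschitz embedding between spaces with distance functions `dY`, `dZ`:
a family of maps `φ t : Y → Z` (for `t > 0`) such that each `φ t` is `σ t`-Lipschitz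
and `dY x y ≥ C*t` implies `dZ (φ t x) (φ t y) ≥ t * σ t`. -/
def WeakBiLip (dY : Y → Y → ℝ) (dZ : Z → Z → ℝ) (C : ℝ) : Prop :=
  ∃ φ : ℝ → Y → Z, ∀ t : ℝ, 0 < t → ∃ σ : ℝ, 0 < σ ∧
    (∀ x y : Y, dZ (φ t x) (φ t y) ≤ σ * dY x y) ∧
    (∀ x y : Y, C * t ≤ dY x y → t * σ ≤ dZ (φ t x) (φ t y))

/-- `f` is a `C`-biLipschitz embedding (an injective map of biLipschitz
distortion at most `C`, allowing an overall scaling factor `s`). -/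
def BiLipWith (dY : Y → Y → ℝ) (dZ : Z → Z → ℝ) (C : ℝ) (f : Y → Z) : Prop :=
  Function.Injective f ∧ ∃ s : ℝ, 0 < s ∧
    ∀ x y : Y, s * dY x y ≤ dZ (f x) (f y) ∧ dZ (f x) (f y) ≤ C * s * dY x y

/-- Nagata dimension at most `n` with constant at most `γ`: for every scale `s > 0`
there is a covering by sets of diameter at most `γ s` such that every set of diameter
less than `s` meets at most `n + 1` members of the covering. -/
def NagataDimD (d : Y → Y → ℝ) (n : ℕ) (γ : ℝ) : Prop :=
  ∀ s : ℝ, 0 < s → ∃ B : Set (Set Y),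
    (∀ y : Y, ∃ b ∈ B, y ∈ b) ∧
    (∀ b ∈ B, ediamD d b ≤ ENNReal.ofReal (γ * s)) ∧
    (∀ A : Set Y, ediamD d A < ENNReal.ofReal s →
      {b | b ∈ B ∧ (b ∩ A).Nonempty}.encard ≤ ((n : ℕ∞) + 1))

/-- Markov type 2 with constant `M`, for the distance function `d`: for every stationary
reversible Markov chain on a finite state space (given by a stationary distribution `μ`
and a reversible stochastic transition matrix `P`), every map `f` into the space, and
every time `t`, `E[d(f(Z_t),f(Z_0))²] ≤ M² t E[d(f(Z_1),f(Z_0))²]`. -/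
def HasMarkovType2 (d : Y → Y → ℝ) (M : ℝ) : Prop :=
  ∀ (n : ℕ) (μ : Fin n → ℝ) (P : Matrix (Fin n) (Fin n) ℝ),
    (∀ i, 0 ≤ μ i) → (∑ i, μ i) = 1 →
    (∀ i j, 0 ≤ P i j) → (∀ i, (∑ j, P i j) = 1) →
    (∀ i j, μ i * P i j = μ j * P j i) →
    ∀ (f : Fin n → Y) (t : ℕ),
      (∑ i, ∑ j, μ i * (P ^ t) i j * d (f i) (f j) ^ 2) ≤
        M ^ 2 * t * ∑ i, ∑ j, μ i * P i j * d (f i) (f j) ^ 2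

/-- `D`-doubling: every ball of radius `r` can be covered by `D` balls of radius `r/2`. -/
def Doubling (d : Y → Y → ℝ) (D : ℕ) : Prop :=
  ∀ r : ℝ, 0 < r → ∀ x : Y, ∃ c : Fin D → Y,
    ∀ y : Y, d x y ≤ r → ∃ i, d (c i) y ≤ r / 2

/-- `A` is an arc from `x` to `y`: the image of an injective continuous map of `[0,1]`
sending the endpoints to `x` and `y`. -/
def IsArc {T : Type*} [MetricSpace T] (x y : T) (A : Set T) : Prop :=
  ∃ γ : ℝ → T, ContinuousOn γ (Icc 0 1) ∧ InjOn γ (Icc 0 1) ∧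
    γ 0 = x ∧ γ 1 = y ∧ γ '' (Icc 0 1) = A

/-- `A` is a geodesic segment from `x` to `y`: the image of an isometric embedding
of `[0, dist x y]` sending the endpoints to `x` and `y`. -/
def IsGeodesicSeg {T : Type*} [MetricSpace T] (x y : T) (A : Set T) : Prop :=
  ∃ γ : ℝ → T, γ 0 = x ∧ γ (dist x y) = y ∧
    (∀ s ∈ Icc (0 : ℝ) (dist x y), ∀ t ∈ Icc (0 : ℝ) (dist x y),
      dist (γ s) (γ t) = |s - t|) ∧
    γ '' (Icc 0 (dist x y)) = A

/-- `T` is an ℝ-tree: any two (distinct) points are joined by a unique arc,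
and this arc is a geodesic. -/
def IsRTree (T : Type*) [MetricSpace T] : Prop :=
  ∀ x y : T, x ≠ y →
    (∃ A : Set T, IsArc x y A) ∧
    (∀ A A' : Set T, IsArc x y A → IsArc x y A' → A = A') ∧
    (∀ A : Set T, IsArc x y A → IsGeodesicSeg x y A)

/-- The sup (ℓ∞-product) distance on a finite product of metric spaces. -/
def piSupDist {n : ℕ} {T : Fin n → Type*} (I : ∀ i, MetricSpace (T i)) :
    (∀ i, T i) → (∀ i, T i) → ℝ :=
  letI := I
  fun f g => dist f g

/-- The ℓ1-product distance on a finite product of metric spaces. -/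
def piL1Dist {n : ℕ} {T : Fin n → Type*} (I : ∀ i, MetricSpace (T i)) :
    (∀ i, T i) → (∀ i, T i) → ℝ :=
  letI := I
  fun f g => ∑ i, dist (f i) (g i)

/-- The ℓ1 distance on `ℝ^m`. -/
def l1Dist (m : ℕ) (x y : Fin m → ℝ) : ℝ := ∑ i, |x i - y i|

/-- The ℓp distance on `ℝ^m`. -/
def lpDist (m : ℕ) (p : ℝ) (x y : Fin m → ℝ) : ℝ :=
  (∑ i, |x i - y i| ^ p) ^ (1 / p)

/-- The (pseudo)distance of the ℝ-star over the index type `ι`: the wedge sum of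
copies of `[0,∞)` indexed by `ι`, glued at `0`. -/
def starDist {ι : Type*} (p q : ι × ℝ≥0) : ℝ :=
  if p.1 = q.1 then |(p.2 : ℝ) - (q.2 : ℝ)| else (p.2 : ℝ) + (q.2 : ℝ)

/-- The sup (ℓ∞-product) of finitely many distance functions. -/
def supD {n : ℕ} {T : Fin n → Type*} (d : ∀ i, T i → T i → ℝ) (f g : ∀ i, T i) : ℝ :=
  ((Finset.univ.sup fun i => (d i (f i) (g i)).toNNReal : ℝ≥0) : ℝ)

/-- The infimum of distortions of biLipschitz embeddings of `(Y, dY)` into `(Z, dZ)`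
(`∞` if there is no such embedding). -/
def cEmb (dY : Y → Y → ℝ) (dZ : Z → Z → ℝ) : ℝ≥0∞ :=
  sInf { D : ℝ≥0∞ | ∃ C : ℝ, 0 < C ∧ D = ENNReal.ofReal C ∧
    ∃ f : Y → Z, BiLipWith dY dZ C f }

/-- `c_1^{m,dom}(X,d)`: the infimum of all `D > 0` such that there exist injective
`1`-Lipschitz maps `φ i : X → ℝ` and weights `α i ≥ 0` summing to `1` with
`∑ i, α i * |φ i x - φ i y| ≥ d x y / D` for all `x y` (`∞` if there is none). -/
def c1dom (d : X → X → ℝ) (m : ℕ) : ℝ≥0∞ :=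
  sInf { D : ℝ≥0∞ | ∃ C : ℝ, 0 < C ∧ D = ENNReal.ofReal C ∧
    ∃ (φ : Fin m → X → ℝ) (α : Fin m → ℝ),
      (∀ i, Function.Injective (φ i)) ∧
      (∀ i, ∀ x y : X, |φ i x - φ i y| ≤ d x y) ∧
      (∀ i, 0 ≤ α i) ∧ (∑ i, α i) = 1 ∧
      ∀ x y : X, d x y / C ≤ ∑ i, α i * |φ i x - φ i y| }

/-- The Hamming distance on the Hamming cube `{0,1}^M`, as a real number. -/
def hamDist {M : ℕ} (x y : Fin M → Bool) : ℝ :=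
  ((Finset.univ.filter fun i => x i ≠ y i).card : ℝ)

/-- The star graph `St_{n,k}`: the one-point coalescence of `n` paths of length `k`,
realized inside `ℤ^n` as the multiples `α eᵢ` with `0 ≤ α ≤ k`. -/
def St (n k : ℕ) : Type :=
  {x : Fin n → ℤ // ∃ i : Fin n, (∀ j : Fin n, j ≠ i → x j = 0) ∧ 0 ≤ x i ∧ x i ≤ (k : ℤ)}

/-- The ℓ1 metric on the star graph `St_{n,k}`. -/
def stDist {n k : ℕ} (x y : St n k) : ℝ := ∑ j, |(x.1 j : ℝ) - (y.1 j : ℝ)|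

/-- The endpoint `k eᵢ` of the `i`-th branch of the star graph. -/
def St.endpoint {n k : ℕ} (i : Fin n) : St n k :=
  ⟨fun j => if j = i then (k : ℤ) else 0, i, fun j hj => if_neg hj, by simp, by simp⟩

/-- The cycle metric on `ℤ/nℤ`. -/
def cycDist {n : ℕ} (a b : ZMod n) : ℝ := ((min ((a - b).val) ((b - a).val) : ℕ) : ℝ)

/-- The rectangular grid `G_{k,n} = ([0,k] ∩ ℤ) × ([0,n] ∩ ℤ)`. -/
def Grid2 (k n : ℕ) : Type :=
  {p : ℤ × ℤ // 0 ≤ p.1 ∧ p.1 ≤ (k : ℤ) ∧ 0 ≤ p.2 ∧ p.2 ≤ (n : ℤ)}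

/-- The ℓ1 metric on the grid `G_{k,n}`. -/
def grid2Dist {k n : ℕ} (x y : Grid2 k n) : ℝ :=
  |(x.1.1 : ℝ) - (y.1.1 : ℝ)| + |(x.1.2 : ℝ) - (y.1.2 : ℝ)|

/-- The `m`-dimensional grid `G^m({n_i}) = ∏ i, ([0, n_i] ∩ ℤ)`. -/
def GridM (m : ℕ) (n : Fin m → ℕ) : Type :=
  {p : Fin m → ℤ // ∀ i, 0 ≤ p i ∧ p i ≤ (n i : ℤ)}

/-- The ℓ1 metric on the `m`-dimensional grid. -/
def gridMDist {m : ℕ} {n : Fin m → ℕ} (x y : GridM m n) : ℝ :=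
  ∑ i, |(x.1 i : ℝ) - (y.1 i : ℝ)|

section TreeLemmas

variable {T : Type*} [MetricSpace T]

/-- A geodesic parametrization from `x` to `y`. -/
def GeoMap (x y : T) (γ : ℝ → T) : Prop :=
  γ 0 = x ∧ γ (dist x y) = y ∧
    ∀ s ∈ Icc (0:ℝ) (dist x y), ∀ t ∈ Icc (0:ℝ) (dist x y), dist (γ s) (γ t) = |s - t|

lemma exists_geoMap (ht : IsRTree T) {x y : T} (hxy : x ≠ y) :
    ∃ γ : ℝ → T, GeoMap x y γ := by
  obtain ⟨⟨A, hA⟩, -, hgeo⟩ := ht x y hxy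
  obtain ⟨γ, h0, h1, hiso, -⟩ := hgeo A hA
  exact ⟨γ, h0, h1, hiso⟩

lemma gp_key (ht : IsRTree T) {r y : T} {γ : ℝ → T}
    (hγ : GeoMap r y γ) (x : T) :
    0 ≤ (dist r x + dist r y - dist x y) / 2 ∧
    (dist r x + dist r y - dist x y) / 2 ≤ dist r x ∧
    (dist r x + dist r y - dist x y) / 2 ≤ dist r y ∧
    dist x (γ ((dist r x + dist r y - dist x y) / 2)) =
      dist r x - (dist r x + dist r y - dist x y) / 2 := by
  obtain ⟨hγ0, hγ1, hγiso⟩ := hγ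
  have htr1 : dist x y ≤ dist x r + dist r y := dist_triangle x r y
  have htr2 : dist r y ≤ dist r x + dist x y := dist_triangle r x y
  have htr3 : dist r x ≤ dist r y + dist y x := dist_triangle r y x
  have hc1 : dist x r = dist r x := dist_comm x r
  have hc2 : dist y x = dist x y := dist_comm y x
  refine ⟨by linarith, by linarith, by linarith, ?_⟩
  by_cases hrx : r = x
  · subst hrx
    have h0 : (dist r r + dist r y - dist r y) / 2 = 0 := by
      rw [dist_self]; ring
    rw [h0, hγ0, dist_self]
    simp [dist_self]
  by_cases hxy : x = y
  · subst hxy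
    have h0 : (dist r x + dist r x - dist x x) / 2 = dist r x := by
      rw [dist_self]; ring
    rw [h0, hγ1, dist_self]
    ring
  -- main case
  obtain ⟨γ1, h10, h11, h1iso⟩ := exists_geoMap ht hrx
  set dx := dist r x with hdx
  set dy := dist r y with hdy
  have hdx0 : 0 ≤ dx := dist_nonneg
  have hdy0 : 0 ≤ dy := dist_nonneg
  set M := min dx dy with hM
  set E := {t : ℝ | t ∈ Icc 0 M ∧ γ1 t = γ t} with hE
  have hE0 : (0:ℝ) ∈ E := ⟨⟨le_refl 0, le_min hdx0 hdy0⟩, by rw [h10, hγ0]⟩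
  have hbdd : BddAbove E := ⟨M, fun t htE => htE.1.2⟩
  set T0 := sSup E with hT0
  have hT00 : 0 ≤ T0 := le_csSup hbdd hE0
  have hT0M : T0 ≤ M := csSup_le ⟨0, hE0⟩ fun t htE => htE.1.2
  have hT0x : T0 ≤ dx := hT0M.trans (min_le_left _ _)
  have hT0y : T0 ≤ dy := hT0M.trans (min_le_right _ _)
  have hT0mem : T0 ∈ Icc 0 M := ⟨hT00, hT0M⟩
  have hagree : γ1 T0 = γ T0 := by
    have hkey : ∀ ε : ℝ, 0 < ε → dist (γ1 T0) (γ T0) ≤ 2 * ε := by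
      intro ε hε
      obtain ⟨t, htE, htlt⟩ := exists_lt_of_lt_csSup ⟨0, hE0⟩
        (show T0 - ε < T0 by linarith)
      have htle : t ≤ T0 := le_csSup hbdd htE
      have ht1 : t ∈ Icc (0:ℝ) dx := ⟨htE.1.1, htE.1.2.trans (min_le_left _ _)⟩
      have ht2 : t ∈ Icc (0:ℝ) dy := ⟨htE.1.1, htE.1.2.trans (min_le_right _ _)⟩
      have hT1 : T0 ∈ Icc (0:ℝ) dx := ⟨hT00, hT0x⟩
      have hT2 : T0 ∈ Icc (0:ℝ) dy := ⟨hT00, hT0y⟩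
      have e1 : dist (γ1 T0) (γ1 t) = |T0 - t| := h1iso T0 hT1 t ht1
      have e2 : dist (γ t) (γ T0) = |t - T0| := hγiso t ht2 T0 hT2
      calc dist (γ1 T0) (γ T0) ≤ dist (γ1 T0) (γ1 t) + dist (γ1 t) (γ T0) :=
            dist_triangle _ _ _
        _ = |T0 - t| + |t - T0| := by rw [e1, htE.2, e2]
        _ ≤ 2 * ε := by
            rw [abs_of_nonneg (by linarith), abs_of_nonpos (by linarith)]
            linarith
    by_contra hne
    have hpos : 0 < dist (γ1 T0) (γ T0) := dist_pos.2 hne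
    linarith [hkey (dist (γ1 T0) (γ T0) / 3) (by linarith)]
  have hxc : dist x (γ1 T0) = dx - T0 := by
    have := h1iso dx ⟨hdx0, le_refl dx⟩ T0 ⟨hT00, hT0x⟩
    rw [h11] at this
    rw [this, abs_of_nonneg (by linarith)]
  have hyc : dist y (γ T0) = dy - T0 := by
    have := hγiso dy ⟨hdy0, le_refl dy⟩ T0 ⟨hT00, hT0y⟩
    rw [hγ1] at this
    rw [this, abs_of_nonneg (by linarith)]
  -- the sum formula
  have hsum : dist x y = (dx - T0) + (dy - T0) := by
    rcases eq_or_lt_of_le hT0x with hT0dx | hT0dx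
    · -- T0 = dx : γ1 T0 = x
      have hx : γ1 T0 = x := by
        have h0 : dist x (γ1 T0) = 0 := by rw [hxc, ← hT0dx]; ring
        exact (dist_eq_zero.1 (by rw [dist_comm]; exact h0))
      have : dist x y = dist (γ T0) (γ dy) := by rw [← hagree, hx, hγ1]
      rw [this, hγiso T0 ⟨hT00, hT0y⟩ dy ⟨hdy0, le_refl dy⟩,
        abs_of_nonpos (by linarith)]
      linarith
    rcases eq_or_lt_of_le hT0y with hT0dy | hT0dy
    · -- T0 = dy : γ T0 = y
      have hyq : γ T0 = y := by
        have h0 : dist y (γ T0) = 0 := by rw [hyc, ← hT0dy]; ring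
        exact (dist_eq_zero.1 (by rw [dist_comm]; exact h0))
      have : dist x y = dist x (γ1 T0) := by rw [← hyq, hagree]
      rw [this, hxc]; linarith
    · -- arc construction
      set J := dx - T0 with hJ
      set L := dx + dy - 2 * T0 with hL
      have hJ0 : 0 < J := by simp only [hJ]; linarith
      have hJL : J < L := by simp only [hJ, hL]; linarith
      have hL0 : 0 < L := lt_trans hJ0 hJL
      set η : ℝ → T := fun u => if u ≤ J then γ1 (dx - u) else γ (u - dx + 2 * T0)
        with hη
      have hη1 : ∀ u : ℝ, u ≤ J → η u = γ1 (dx - u) := fun u h => if_pos h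
      have hη2 : ∀ u : ℝ, J < u → η u = γ (u - dx + 2 * T0) :=
        fun u h => if_neg (not_le.2 h)
      have hmem1 : ∀ u : ℝ, 0 ≤ u → u ≤ J → dx - u ∈ Icc (0:ℝ) dx :=
        fun u h1 h2 => ⟨by simp only [hJ] at h2; linarith, by linarith⟩
      have hmem2 : ∀ u : ℝ, J ≤ u → u ≤ L → u - dx + 2*T0 ∈ Icc (0:ℝ) dy := by
        intro u h1 h2
        simp only [hJ] at h1
        simp only [hL] at h2
        constructor <;> linarith
      have hηJ : η J = γ T0 := by
        rw [hη1 J (le_refl J)]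
        have : dx - J = T0 := by simp only [hJ]; ring
        rw [this, hagree]
      -- distance bound
      have haux : ∀ u v : ℝ, u ∈ Icc 0 L → v ∈ Icc 0 L → u ≤ v →
          dist (η u) (η v) ≤ v - u := by
        intro u v hu hv huv
        by_cases h1 : u ≤ J
        · by_cases h2 : v ≤ J
          · rw [hη1 u h1, hη1 v h2,
              h1iso (dx - u) (hmem1 u hu.1 h1) (dx - v) (hmem1 v hv.1 h2)]
            rw [abs_of_nonneg (by linarith)]; linarith
          · push_neg at h2
            have e1 : dist (η u) (η J) = J - u := by
              rw [hη1 u h1, hη1 J (le_refl J),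
                h1iso (dx - u) (hmem1 u hu.1 h1) (dx - J) (hmem1 J hJ0.le (le_refl J))]
              rw [abs_of_nonneg (by linarith)]; ring
            have e2 : dist (η J) (η v) = v - J := by
              rw [hηJ, hη2 v h2,
                hγiso T0 ⟨hT00, hT0y⟩ (v - dx + 2*T0) (hmem2 v h2.le hv.2)]
              rw [abs_of_nonpos (by simp only [hJ] at h2; linarith)]
              simp only [hJ] at h2 ⊢; ring
            calc dist (η u) (η v) ≤ dist (η u) (η J) + dist (η J) (η v) :=
                  dist_triangle _ _ _
              _ = v - u := by rw [e1, e2]; ring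
        · push_neg at h1
          have h2 : ¬ v ≤ J := by push_neg; linarith
          push_neg at h2
          rw [hη2 u h1, hη2 v h2,
            hγiso (u - dx + 2*T0) (hmem2 u h1.le hu.2) (v - dx + 2*T0) (hmem2 v h2.le hv.2)]
          rw [abs_of_nonpos (by linarith)]; linarith
      have hηdist : ∀ u ∈ Icc (0:ℝ) L, ∀ v ∈ Icc (0:ℝ) L,
          dist (η u) (η v) ≤ |u - v| := by
        intro u hu v hv
        rcases le_total u v with h | h
        · rw [abs_of_nonpos (by linarith)]
          have := haux u v hu hv h; linarith
        · rw [abs_of_nonneg (by linarith), dist_comm]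
          have := haux v u hv hu h; linarith
      -- injectivity
      have hηinj : InjOn η (Icc 0 L) := by
        intro u hu v hv heq
        by_cases h1 : u ≤ J
        · by_cases h2 : v ≤ J
          · rw [hη1 u h1, hη1 v h2] at heq
            have := h1iso (dx - u) (hmem1 u hu.1 h1) (dx - v) (hmem1 v hv.1 h2)
            rw [heq, dist_self] at this
            have := abs_eq_zero.1 this.symm
            linarith [this]
          · exfalso
            push_neg at h2
            rw [hη1 u h1, hη2 v h2] at heq
            set w := v - dx + 2*T0 with hw
            have hwmem : w ∈ Icc (0:ℝ) dy := hmem2 v h2.le hv.2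
            have humem : dx - u ∈ Icc (0:ℝ) dx := hmem1 u hu.1 h1
            have e1 : dist r (γ1 (dx - u)) = dx - u := by
              rw [← h10, h1iso 0 ⟨le_refl 0, hdx0⟩ (dx - u) humem,
                abs_of_nonpos (by linarith [humem.1])]
              ring
            have e2 : dist r (γ w) = w := by
              rw [← hγ0, hγiso 0 ⟨le_refl 0, hdy0⟩ w hwmem,
                abs_of_nonpos (by linarith [hwmem.1])]
              ring
            have hweq : dx - u = w := by rw [← e1, ← e2, heq]
            have hwE : w ∈ E := by
              refine ⟨⟨hwmem.1, le_min (by rw [← hweq]; linarith [humem.2]) hwmem.2⟩, ?_⟩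
              rw [← hweq, heq, hweq]
            have : w ≤ T0 := le_csSup hbdd hwE
            have : T0 < w := by simp only [hw, hJ] at h2 ⊢; linarith
            linarith
        · by_cases h2 : v ≤ J
          · exfalso
            push_neg at h1
            rw [hη1 v h2, hη2 u h1] at heq
            set w := u - dx + 2*T0 with hw
            have hwmem : w ∈ Icc (0:ℝ) dy := hmem2 u h1.le hu.2
            have hvmem : dx - v ∈ Icc (0:ℝ) dx := hmem1 v hv.1 h2
            have e1 : dist r (γ1 (dx - v)) = dx - v := by
              rw [← h10, h1iso 0 ⟨le_refl 0, hdx0⟩ (dx - v) hvmem,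
                abs_of_nonpos (by linarith [hvmem.1])]
              ring
            have e2 : dist r (γ w) = w := by
              rw [← hγ0, hγiso 0 ⟨le_refl 0, hdy0⟩ w hwmem,
                abs_of_nonpos (by linarith [hwmem.1])]
              ring
            have hweq : dx - v = w := by rw [← e1, ← e2, heq]
            have hwE : w ∈ E := by
              refine ⟨⟨hwmem.1, le_min (by rw [← hweq]; linarith [hvmem.2]) hwmem.2⟩, ?_⟩
              rw [← hweq, ← heq, hweq]
            have : w ≤ T0 := le_csSup hbdd hwE
            have : T0 < w := by simp only [hw, hJ] at h1 ⊢; linarith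
            linarith
          · push_neg at h1 h2
            rw [hη2 u h1, hη2 v h2] at heq
            have := hγiso (u - dx + 2*T0) (hmem2 u h1.le hu.2)
              (v - dx + 2*T0) (hmem2 v h2.le hv.2)
            rw [heq, dist_self] at this
            have := abs_eq_zero.1 this.symm
            linarith [this]
      -- the arc
      set φ : ℝ → T := fun t => η (t * L) with hφ
      have hmaps : ∀ t ∈ Icc (0:ℝ) 1, t * L ∈ Icc (0:ℝ) L := by
        intro t htm
        exact ⟨mul_nonneg htm.1 hL0.le, by nlinarith [htm.2]⟩
      have hηcont : ContinuousOn η (Icc 0 L) := by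
        refine (LipschitzOnWith.of_dist_le_mul (K := 1) ?_).continuousOn
        intro u hu v hv
        rw [NNReal.coe_one, one_mul, Real.dist_eq]
        exact hηdist u hu v hv
      have hφcont : ContinuousOn φ (Icc 0 1) := by
        refine hηcont.comp ?_ (fun t htm => hmaps t htm)
        exact (continuous_id.mul continuous_const).continuousOn
      have hφinj : InjOn φ (Icc 0 1) := by
        intro a ha b hb hab
        have := hηinj (hmaps a ha) (hmaps b hb) hab
        exact mul_right_cancel₀ hL0.ne' this
      have hφ0 : φ 0 = x := by
        simp only [hφ, zero_mul]
        rw [hη1 0 hJ0.le, sub_zero, h11]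
      have hφ1 : φ 1 = y := by
        simp only [hφ, one_mul]
        rw [hη2 L hJL]
        have : L - dx + 2*T0 = dy := by simp only [hL]; ring
        rw [this, hγ1]
      set A := φ '' Icc 0 1 with hA
      have hArc : IsArc x y A := ⟨φ, hφcont, hφinj, hφ0, hφ1, rfl⟩
      obtain ⟨ψ, hψ0, hψ1, hψiso, hψim⟩ := (ht x y hxy).2.2 A hArc
      have hcA : γ T0 ∈ A := by
        refine ⟨J / L, ⟨div_nonneg hJ0.le hL0.le, (div_le_one hL0).2 hJL.le⟩, ?_⟩
        show η (J / L * L) = γ T0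
        rw [div_mul_cancel₀ _ hL0.ne', hηJ]
      rw [← hψim] at hcA
      obtain ⟨w, hwmem, hψw⟩ := hcA
      have hdxy0 : 0 ≤ dist x y := dist_nonneg
      have e1 : dist x (γ T0) = w := by
        rw [← hψw, ← hψ0, hψiso 0 ⟨le_refl 0, hdxy0⟩ w hwmem,
          abs_of_nonpos (by linarith [hwmem.1])]
        ring
      have e2 : dist y (γ T0) = dist x y - w := by
        calc dist y (γ T0) = dist (ψ (dist x y)) (ψ w) := by rw [hψ1, hψw]
          _ = dist x y - w := by
              rw [hψiso (dist x y) ⟨hdxy0, le_refl _⟩ w hwmem,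
                abs_of_nonneg (by linarith [hwmem.2])]
      have e3 : dist x (γ T0) = dx - T0 := by rw [← hagree]; exact hxc
      rw [e3] at e1
      rw [hyc] at e2
      linarith
  have hT0eq : (dx + dy - dist x y) / 2 = T0 := by rw [hsum]; ring
  rw [hT0eq, ← hagree, hxc]

lemma gp_tri (ht : IsRTree T) (r x y z : T) :
    min ((dist r x + dist r y - dist x y) / 2) ((dist r y + dist r z - dist y z) / 2) ≤
      (dist r x + dist r z - dist x z) / 2 := by
  have hxz : dist x z ≤ dist x r + dist r z := dist_triangle x r z
  have hcxr : dist x r = dist r x := dist_comm x r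
  by_cases hry : r = y
  · subst hry
    have h1 : (dist r x + dist r r - dist x r) / 2 = 0 := by
      rw [dist_self, hcxr]; ring
    calc min ((dist r x + dist r r - dist x r) / 2) ((dist r r + dist r z - dist r z) / 2)
        ≤ (dist r x + dist r r - dist x r) / 2 := min_le_left _ _
      _ = 0 := h1
      _ ≤ (dist r x + dist r z - dist x z) / 2 := by linarith
  obtain ⟨γ, hγ⟩ := exists_geoMap ht hry
  obtain ⟨hx0, hx1, hx2, hx3⟩ := gp_key ht hγ x
  obtain ⟨hz0, hz1, hz2, hz3⟩ := gp_key ht hγ z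
  set t1 := (dist r x + dist r y - dist x y) / 2 with ht1
  set t2 := (dist r z + dist r y - dist z y) / 2 with ht2
  have ht2eq : (dist r y + dist r z - dist y z) / 2 = t2 := by
    rw [ht2, dist_comm z y]; ring
  rw [ht2eq]
  have hcc : dist (γ t1) (γ t2) = |t1 - t2| := hγ.2.2 t1 ⟨hx0, hx2⟩ t2 ⟨hz0, hz2⟩
  have htri : dist x z ≤ dist x (γ t1) + dist (γ t1) (γ t2) + dist (γ t2) z := by
    calc dist x z ≤ dist x (γ t1) + dist (γ t1) z := dist_triangle _ _ _
      _ ≤ dist x (γ t1) + (dist (γ t1) (γ t2) + dist (γ t2) z) := by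
          linarith [dist_triangle (γ t1) (γ t2) z]
      _ = _ := by ring
  rw [hx3, hcc] at htri
  have hz3' : dist (γ t2) z = dist r z - t2 := by rw [dist_comm]; exact hz3
  rw [hz3'] at htri
  rcases le_total t1 t2 with h | h
  · rw [abs_of_nonpos (by linarith)] at htri
    calc min t1 t2 ≤ t1 := min_le_left _ _
      _ ≤ (dist r x + dist r z - dist x z) / 2 := by linarith
  · rw [abs_of_nonneg (by linarith)] at htri
    calc min t1 t2 ≤ t2 := min_le_right _ _
      _ ≤ (dist r x + dist r z - dist x z) / 2 := by linarith

end TreeLemmas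

lemma ediamD_le_aux {Y : Type*} {d : Y → Y → ℝ} {A : Set Y} {c : ℝ}
    (h : ∀ x ∈ A, ∀ y ∈ A, d x y ≤ c) : ediamD d A ≤ ENNReal.ofReal c :=
  iSup₂_le fun x hx => iSup₂_le fun y hy => ENNReal.ofReal_le_ofReal (h x hx y hy)

lemma ediamD_lt_aux {Y : Type*} {d : Y → Y → ℝ} {A : Set Y} {s : ℝ}
    (h : ediamD d A < ENNReal.ofReal s) {x y : Y} (hx : x ∈ A) (hy : y ∈ A) :
    d x y < s := by
  have h1 : ENNReal.ofReal (d x y) ≤ ediamD d A := by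
    calc ENNReal.ofReal (d x y)
        ≤ ⨆ y' ∈ A, ENNReal.ofReal (d x y') :=
          le_iSup₂ (f := fun y' (_ : y' ∈ A) => ENNReal.ofReal (d x y')) y hy
      _ ≤ ediamD d A :=
          le_iSup₂ (f := fun x' (_ : x' ∈ A) => ⨆ y' ∈ A, ENNReal.ofReal (d x' y')) x hx
  have h2 : ENNReal.ofReal (d x y) < ENNReal.ofReal s := h1.trans_lt h
  by_contra hc
  push_neg at hc
  exact absurd h2 (not_lt.2 (ENNReal.ofReal_le_ofReal hc))

set_option maxHeartbeats 2000000 in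
/-- For every `m` there is a constant `γ = γ(m)` such that every
ℓ∞-product of `m` ℝ-trees has Nagata dimension `≤ m` with constant `≤ γ`. -/
theorem statement3 (m : ℕ) :
    ∃ γ : ℝ, ∀ (T : Fin m → Type u) (I : ∀ i, MetricSpace (T i)),
      (∀ i, @IsRTree (T i) (I i)) →
      NagataDimD (piSupDist I) m γ := by
  refine ⟨2 * ((m : ℝ) + 1), fun T I htree => ?_⟩
  letI := I
  have hpd : ∀ f g : ∀ i, T i, piSupDist I f g = dist f g := fun f g => rfl
  intro s hs
  by_cases hX : Nonempty (∀ i, T i)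
  swap
  · refine ⟨∅, fun y => absurd ⟨y⟩ hX, by simp, fun A _ => ?_⟩
    have he : {b | b ∈ (∅ : Set (Set (∀ i, T i))) ∧ (b ∩ A).Nonempty} = ∅ := by simp
    rw [he, Set.encard_empty]
    exact zero_le
  obtain ⟨r⟩ := hX
  set q : ℕ := m + 1 with hq
  have hq0 : 0 < (q : ℤ) := by exact_mod_cast Nat.succ_pos m
  have hqR : (q : ℝ) = (m : ℝ) + 1 := by rw [hq]; push_cast; ring
  have hdc : ∀ (f g : ∀ i, T i) (i : Fin m), dist (f i) (g i) ≤ dist f g :=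
    fun f g i => dist_le_pi_dist f g i
  set h : ∀ i : Fin m, T i → ℝ := fun i z => dist (r i) z with hh
  set gp : ∀ i : Fin m, T i → T i → ℝ :=
    fun i z w => (dist (r i) z + dist (r i) w - dist z w) / 2 with hgp
  have hgp_tri : ∀ (i : Fin m) (a b c : T i), min (gp i a b) (gp i b c) ≤ gp i a c :=
    fun i a b c => gp_tri (htree i) (r i) a b c
  have hgp_comm : ∀ (i : Fin m) (a b : T i), gp i a b = gp i b a := by
    intro i a b; simp only [hgp, dist_comm]; ring
  have hgp_self : ∀ (i : Fin m) (a : T i), gp i a a = h i a := by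
    intro i a; simp only [hgp, hh, dist_self]; ring
  have hd_eq : ∀ (i : Fin m) (a b : T i), dist a b = h i a + h i b - 2 * gp i a b := by
    intro i a b; simp only [hgp, hh]; ring
  have hlip : ∀ (i : Fin m) (a b : T i), |h i a - h i b| ≤ dist a b := by
    intro i a b
    simp only [hh, dist_comm (r i)]
    exact abs_dist_sub_le a b (r i)
  set a : Fin q → (Fin m → ℤ) → Fin m → ℝ :=
    fun j k i => (((q : ℤ) * k i + ((j : ℕ) : ℤ) : ℤ) : ℝ) * s with ha
  set Box : Fin q → (Fin m → ℤ) → (∀ i, T i) → Prop :=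
    fun j k x => ∀ i, a j k i ≤ h i (x i) ∧ h i (x i) < a j k i + m * s with hBox
  set piece : Fin q → (Fin m → ℤ) → (∀ i, T i) → Set (∀ i, T i) :=
    fun j k x => { y | ∀ i, a j k i ≤ h i (y i) ∧ h i (y i) < a j k i + m * s ∧
      a j k i - s < gp i (x i) (y i) } with hpiece
  set B : Set (Set (∀ i, T i)) :=
    { P | ∃ j k x, Box j k x ∧ P = piece j k x } with hB
  refine ⟨B, ?_, ?_, ?_⟩
  · -- covering
    intro x
    set u : Fin m → ℤ := fun i => ⌊h i (x i) / s⌋ with hu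
    have hu1 : ∀ i, (u i : ℝ) * s ≤ h i (x i) ∧ h i (x i) < ((u i : ℝ) + 1) * s := by
      intro i
      constructor
      · have h1 : (u i : ℝ) ≤ h i (x i) / s := Int.floor_le _
        calc (u i : ℝ) * s ≤ (h i (x i) / s) * s := by nlinarith
          _ = h i (x i) := div_mul_cancel₀ _ hs.ne'
      · have h1 : h i (x i) / s < (u i : ℝ) + 1 := Int.lt_floor_add_one _
        calc h i (x i) = (h i (x i) / s) * s := (div_mul_cancel₀ _ hs.ne').symm
          _ < ((u i : ℝ) + 1) * s := by nlinarith
    set g : Fin m → Fin q := fun i => ⟨((u i + 1) % (q : ℤ)).toNat, by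
      have h1 : 0 ≤ (u i + 1) % (q : ℤ) := Int.emod_nonneg _ hq0.ne'
      have h2 : (u i + 1) % (q : ℤ) < (q : ℤ) := Int.emod_lt_of_pos _ hq0
      omega⟩ with hg
    have hex : ∃ j : Fin q, ∀ i, g i ≠ j := by
      by_contra hcon
      push_neg at hcon
      have hsurj : Function.Surjective g := by
        intro j; obtain ⟨i, hi⟩ := hcon j; exact ⟨i, hi⟩
      have := Fintype.card_le_of_surjective g hsurj
      simp only [Fintype.card_fin, hq] at this
      omega
    obtain ⟨j, hj⟩ := hex
    set k : Fin m → ℤ := fun i => (u i - ((j : ℕ) : ℤ)) / (q : ℤ) with hk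
    have hke : ∀ i, (q : ℤ) * k i + (u i - ((j : ℕ) : ℤ)) % (q : ℤ)
        = u i - ((j : ℕ) : ℤ) := fun i => Int.mul_ediv_add_emod _ _
    have hre : ∀ i, 0 ≤ (u i - ((j : ℕ) : ℤ)) % (q : ℤ) ∧
        (u i - ((j : ℕ) : ℤ)) % (q : ℤ) < (q : ℤ) :=
      fun i => ⟨Int.emod_nonneg _ hq0.ne', Int.emod_lt_of_pos _ hq0⟩
    have hne : ∀ i, (u i - ((j : ℕ) : ℤ)) % (q : ℤ) ≠ (m : ℤ) := by
      intro i hcon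
      apply hj i
      have hqz : (q : ℤ) = (m : ℤ) + 1 := by rw [hq]; push_cast; ring
      have h1 : u i + 1 = ((j : ℕ) : ℤ) + (q : ℤ) * (k i + 1) := by
        have := hke i
        rw [hcon] at this
        have h2 : (q : ℤ) * (k i + 1) = (q : ℤ) * k i + (q : ℤ) := by ring
        rw [h2, hqz]
        rw [hqz] at this
        linarith
      have h3 : (u i + 1) % (q : ℤ) = ((j : ℕ) : ℤ) := by
        rw [h1, Int.add_mul_emod_self_left]
        exact Int.emod_eq_of_lt (by positivity) (by exact_mod_cast j.2)
      apply Fin.ext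
      show ((u i + 1) % (q : ℤ)).toNat = (j : ℕ)
      rw [h3]
      exact Int.toNat_natCast _
    have hbox : Box j k x := by
      intro i
      have he := hke i
      have hr1 := (hre i).1
      have hr2 := (hre i).2
      have hn := hne i
      have hqz : (q : ℤ) = (m : ℤ) + 1 := by rw [hq]; push_cast; ring
      have h1 : (q : ℤ) * k i + ((j : ℕ) : ℤ) ≤ u i := by linarith
      have h2 : u i + 1 ≤ (q : ℤ) * k i + ((j : ℕ) : ℤ) + (m : ℤ) := by
        have he2 : (u i - ((j : ℕ) : ℤ)) % (q : ℤ) ≤ (m : ℤ) - 1 := by omega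
        linarith
      constructor
      · have hc1 : (((q : ℤ) * k i + ((j : ℕ) : ℤ) : ℤ) : ℝ) ≤ (u i : ℝ) := by
          exact_mod_cast h1
        calc a j k i ≤ (u i : ℝ) * s := by
              simp only [ha]; nlinarith
          _ ≤ h i (x i) := (hu1 i).1
      · have hc2 : ((u i : ℝ) + 1) ≤ (((q : ℤ) * k i + ((j : ℕ) : ℤ) : ℤ) : ℝ) + (m : ℝ) := by
          exact_mod_cast h2
        calc h i (x i) < ((u i : ℝ) + 1) * s := (hu1 i).2
          _ ≤ a j k i + m * s := by simp only [ha]; nlinarith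
    refine ⟨piece j k x, ⟨j, k, x, hbox, rfl⟩, fun i => ⟨(hbox i).1, (hbox i).2, ?_⟩⟩
    rw [hgp_self]
    linarith [(hbox i).1]
  · -- diameter
    rintro b ⟨j, k, x, hbox, rfl⟩
    have hdiam : ∀ y ∈ piece j k x, ∀ y' ∈ piece j k x,
        piSupDist I y y' ≤ 2 * ((m : ℝ) + 1) * s := by
      intro y hy y' hy'
      rw [hpd]
      rw [dist_pi_le_iff (by positivity)]
      intro i
      have h1 := hy i
      have h2 := hy' i
      have hmin := hgp_tri i (y i) (x i) (y' i)
      have hcm : gp i (y i) (x i) = gp i (x i) (y i) := hgp_comm i (y i) (x i)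
      have h3 : a j k i - s < gp i (y i) (y' i) := by
        refine lt_of_lt_of_le (lt_min ?_ h2.2.2) hmin
        rw [hcm]; exact h1.2.2
      have h4 := hd_eq i (y i) (y' i)
      linarith [h1.1, h1.2.1, h2.1, h2.2.1]
    exact ediamD_le_aux hdiam
  · -- multiplicity
    intro A hA
    have hAd : ∀ y ∈ A, ∀ y' ∈ A, dist y y' < s := by
      intro y hy y' hy'
      have := ediamD_lt_aux hA hy hy'
      rw [hpd] at this
      exact this
    have key : ∀ (j : Fin q) (k : Fin m → ℤ) (x : ∀ i, T i) (k' : Fin m → ℤ)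
        (x' : ∀ i, T i), Box j k x → Box j k' x' →
        (piece j k x ∩ A).Nonempty → (piece j k' x' ∩ A).Nonempty →
        piece j k x = piece j k' x' := by
      rintro j k x k' x' hb hb' ⟨y, hy, hyA⟩ ⟨y', hy', hy'A⟩
      have hdyy : dist y y' < s := hAd y hyA y' hy'A
      have hkk : k = k' := by
        by_contra hne
        obtain ⟨i, hi⟩ : ∃ i, k i ≠ k' i := by
          by_contra hco; push_neg at hco; exact hne (funext hco)
        have hcoord := hdc y y' i
        have hlipi := hlip i (y i) (y' i)
        have h1 := hy i
        have h2 := hy' i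
        have habs1 : h i (y i) - h i (y' i) ≤ |h i (y i) - h i (y' i)| := le_abs_self _
        have habs2 : h i (y' i) - h i (y i) ≤ |h i (y i) - h i (y' i)| := by
          rw [abs_sub_comm]; exact le_abs_self _
      -- |a - a'| ≥ q * s, giving coordinate distance > s
        rcases lt_or_gt_of_ne hi with hlt | hgt
        · have hz : k i + 1 ≤ k' i := hlt
          have hzz : (q : ℤ) * k i + ((j : ℕ) : ℤ) + (q : ℤ)
              ≤ (q : ℤ) * k' i + ((j : ℕ) : ℤ) := by nlinarith
          have hstep : a j k i + (q : ℝ) * s ≤ a j k' i := by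
            simp only [ha]
            have hc : ((((q : ℤ) * k i + ((j : ℕ) : ℤ)) : ℤ) : ℝ) + (q : ℝ)
                ≤ ((((q : ℤ) * k' i + ((j : ℕ) : ℤ)) : ℤ) : ℝ) := by
              exact_mod_cast hzz
            nlinarith
          have : s < h i (y' i) - h i (y i) := by
            rw [hqR] at hstep
            linarith [h1.2.1, h2.1]
          linarith
        · have hz : k' i + 1 ≤ k i := hgt
          have hzz : (q : ℤ) * k' i + ((j : ℕ) : ℤ) + (q : ℤ)
              ≤ (q : ℤ) * k i + ((j : ℕ) : ℤ) := by nlinarith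
          have hstep : a j k' i + (q : ℝ) * s ≤ a j k i := by
            simp only [ha]
            have hc : ((((q : ℤ) * k' i + ((j : ℕ) : ℤ)) : ℤ) : ℝ) + (q : ℝ)
                ≤ ((((q : ℤ) * k i + ((j : ℕ) : ℤ)) : ℤ) : ℝ) := by
              exact_mod_cast hzz
            nlinarith
          have : s < h i (y i) - h i (y' i) := by
            rw [hqR] at hstep
            linarith [h2.2.1, h1.1]
          linarith
      subst hkk
      by_cases hgpx : ∀ i, a j k i - s < gp i (x i) (x' i)
      · ext z
        simp only [hpiece, mem_setOf_eq]
        constructor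
        · intro hz i
          refine ⟨(hz i).1, (hz i).2.1, ?_⟩
          have htr := hgp_tri i (x' i) (x i) (z i)
          refine lt_of_lt_of_le (lt_min ?_ (hz i).2.2) htr
          rw [hgp_comm]; exact hgpx i
        · intro hz i
          refine ⟨(hz i).1, (hz i).2.1, ?_⟩
          have htr := hgp_tri i (x i) (x' i) (z i)
          exact lt_of_lt_of_le (lt_min (hgpx i) (hz i).2.2) htr
      · push_neg at hgpx
        obtain ⟨i, hgpi⟩ := hgpx
        exfalso
        have hgyy : gp i (y i) (y' i) ≤ a j k i - s := by
          by_contra hc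
          push_neg at hc
          have c1 : a j k i - s < gp i (y i) (x' i) := by
            refine lt_of_lt_of_le (lt_min hc ?_) (hgp_tri i (y i) (y' i) (x' i))
            rw [hgp_comm]; exact (hy' i).2.2
          have c2 : a j k i - s < gp i (x i) (x' i) := by
            refine lt_of_lt_of_le (lt_min ?_ c1) (hgp_tri i (x i) (y i) (x' i))
            exact (hy i).2.2
          linarith
        have hde := hd_eq i (y i) (y' i)
        have hco := hdc y y' i
        linarith [(hy i).1, (hy' i).1]
    set S := {b | b ∈ B ∧ (b ∩ A).Nonempty} with hS
    set F : Fin q → Set (∀ i, T i) := fun j =>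
      if hex : ∃ P, (P ∈ B ∧ (P ∩ A).Nonempty) ∧
          ∃ k x, Box j k x ∧ P = piece j k x
      then hex.choose else ∅ with hF
    have hsub : S ⊆ Set.range F := by
      rintro b ⟨hbB, hbA⟩
      obtain ⟨j, k, x, hbox, rfl⟩ := hbB
      have hex : ∃ P, (P ∈ B ∧ (P ∩ A).Nonempty) ∧
          ∃ k' x', Box j k' x' ∧ P = piece j k' x' :=
        ⟨piece j k x, ⟨⟨j, k, x, hbox, rfl⟩, hbA⟩, k, x, hbox, rfl⟩
      refine ⟨j, ?_⟩
      simp only [hF, dif_pos hex]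
      obtain ⟨⟨hPB, hPA⟩, k', x', hbox', hPeq⟩ := hex.choose_spec
      rw [hPeq]
      exact key j k' x' k x hbox' hbox (hPeq ▸ hPA) hbA
    calc S.encard ≤ (Set.range F).encard := Set.encard_mono hsub
      _ ≤ (univ : Set (Fin q)).encard := by
          rw [← Set.image_univ]
          exact Set.encard_image_le _ _
      _ = (q : ℕ∞) := by
          rw [Set.encard_univ, ENat.card_eq_coe_fintype_card, Fintype.card_fin]
      _ ≤ ((m : ℕ∞) + 1) := by
          rw [hq]
          push_cast
          exact le_refl _

end Lamplighter
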